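/- Let 𝕊 ⊆ ℝ^ℓ (ℓ ≥ 2) be a state space, let S ⊆ 𝕊 be nonempty, let V ⊆ ℝ^ℓ be a linear subspace, and let Π : ℝ^ℓ → ℝ^ℓ be the orthogonal projection onto V. Then S is observationally complete for Π if and only if S is observationally complete for every linear map M : ℝ^ℓ → ℝⁿ (for every n) whose support (ker M)^⊥ equals V. -/

import Mathlib

open MeasureTheory Metric Set

noncomputable section

/-- `Euc n` is the Euclidean space `ℝⁿ`. -/
abbrev Euc (n : ℕ) : Type := EuclideanSpace ℝ (Fin n)

/-- A state space of linear dimension `ℓ`: a compact convex set contained in (and affinely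
spanning) an affine hyperplane not through the origin, here written as `{x | f x = 1}`
for a nonzero linear functional `f`. -/
def IsStateSpace {ℓ : ℕ} (𝕊 : Set (Euc ℓ)) : Prop :=
  IsCompact 𝕊 ∧ Convex ℝ 𝕊 ∧
    ∃ f : Euc ℓ →ₗ[ℝ] ℝ, f ≠ 0 ∧
      (affineSpan ℝ 𝕊 : Set (Euc ℓ)) = {x | f x = 1}

/-- `R` is admissible for the data set `X` (w.r.t. the state space `𝕊`): it is the image of `𝕊`
under some linear map and satisfies `X ⊆ R ⊆ aff X`. -/
def Admissible {ℓ n : ℕ} (𝕊 : Set (Euc ℓ)) (X R : Set (Euc n)) : Prop :=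
  (∃ M : Euc ℓ →ₗ[ℝ] Euc n, R = M '' 𝕊) ∧ X ⊆ R ∧ R ⊆ (affineSpan ℝ X : Set (Euc n))

/-- Data-driven inference: the admissible sets for `X` of minimal `d`-dimensional Hausdorff
measure, where `d = dim aff X`. -/
def ddi {ℓ n : ℕ} (X : Set (Euc n)) (𝕊 : Set (Euc ℓ)) : Set (Set (Euc n)) :=
  {R | Admissible 𝕊 X R ∧ ∀ R' : Set (Euc n), Admissible 𝕊 X R' →
      μH[(Module.finrank ℝ (affineSpan ℝ X).direction : ℝ)] R ≤
        μH[(Module.finrank ℝ (affineSpan ℝ X).direction : ℝ)] R'}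

/-- A (hyper)-ellipsoid state space in `ℝ^ℓ`: the image of the closed unit ball of `ℝ^(ℓ-1)`
under an injective affine map. -/
def IsHyperEllipsoid {ℓ : ℕ} (𝕊 : Set (Euc ℓ)) : Prop :=
  ∃ F : Euc (ℓ - 1) →ᵃ[ℝ] Euc ℓ, Function.Injective F ∧ 𝕊 = F '' closedBall 0 1

/-- `S` is observationally complete for the measurement `M` (w.r.t. state space `𝕊`). -/
def ObsComplete {ℓ n : ℕ} (𝕊 S : Set (Euc ℓ)) (M : Euc ℓ →ₗ[ℝ] Euc n) : Prop :=
  ddi (M '' S) 𝕊 = {M '' 𝕊}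


open Module
open scoped ENNReal NNReal

section AuxLemmas
variable {m : ℕ}

lemma scaling_sub {ℓ n d : ℕ} (T : Euc ℓ →ₗ[ℝ] Euc n) (D : Submodule ℝ (Euc ℓ))
    (hd : finrank ℝ D = d)
    (hinj : ∀ x ∈ D, T x = 0 → x = 0) :
    ∃ c : ℝ≥0∞, c ≠ 0 ∧ c ≠ ⊤ ∧ ∀ B ⊆ (D : Set (Euc ℓ)),
      μH[(d : ℝ)] (T '' B) = c * μH[(d : ℝ)] B := by
  classical
  set f : ↥D →ₗ[ℝ] Euc n := T.comp D.subtype with hf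
  have hfinj : Function.Injective f := by
    intro x y hxy
    have : T ((x : Euc ℓ) - y) = 0 := by
      simpa [hf, map_sub, sub_eq_zero] using hxy
    have := hinj _ (D.sub_mem x.2 y.2) this
    exact Subtype.ext (by simpa [sub_eq_zero] using this)
  set D' : Submodule ℝ (Euc n) := LinearMap.range f with hD'
  have hd' : finrank ℝ D' = d := by
    rw [hD', LinearMap.finrank_range_of_inj hfinj, hd]
  set Tr : ↥D →ₗ[ℝ] ↥D' := f.rangeRestrict with hTr
  have hTrval : ∀ x : D, (Tr x : Euc n) = T (x : Euc ℓ) := fun x => rfl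
  have hTrinj : Function.Injective Tr := by
    intro x y hxy
    exact hfinj (congrArg Subtype.val hxy)
  set e : ↥D ≃ₗᵢ[ℝ] Euc d := ((stdOrthonormalBasis ℝ ↥D).reindex (finCongr hd)).repr with he
  set e' : ↥D' ≃ₗᵢ[ℝ] Euc d := ((stdOrthonormalBasis ℝ ↥D').reindex (finCongr hd')).repr with he'
  set L : Euc d →ₗ[ℝ] Euc d :=
    (e'.toLinearEquiv.toLinearMap.comp Tr).comp e.symm.toLinearEquiv.toLinearMap with hL
  have hLinj : Function.Injective L := by
    simp only [hL, LinearMap.coe_comp]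
    exact e'.injective.comp (hTrinj.comp e.symm.injective)
  have hLdet : L.det ≠ 0 := by
    have hbij : Function.Bijective L := ⟨hLinj, (LinearMap.injective_iff_surjective).mp hLinj⟩
    have := (LinearEquiv.ofBijective L hbij).isUnit_det'
    exact IsUnit.ne_zero this
  refine ⟨ENNReal.ofReal |L.det|, ne_of_gt (ENNReal.ofReal_pos.mpr (abs_pos.mpr hLdet)),
    ENNReal.ofReal_ne_top, ?_⟩
  intro B hB
  have hcast : ((finrank ℝ (Euc d) : ℕ) : ℝ) = (d : ℝ) := by simp
  haveI : (μH[(d : ℝ)] : Measure (Euc d)).IsAddHaarMeasure := by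
    rw [← hcast]; exact isAddHaarMeasure_hausdorffMeasure
  set B₀ : Set ↥D := Subtype.val ⁻¹' B with hB₀
  have hBeq : Subtype.val '' B₀ = B := by
    rw [hB₀, Set.image_preimage_eq_inter_range, Subtype.range_coe]
    exact inter_eq_self_of_subset_left hB
  have h1 : μH[(d : ℝ)] B = μH[(d : ℝ)] B₀ := by
    rw [← hBeq]
    exact isometry_subtype_coe.hausdorffMeasure_image (Or.inl (by positivity)) _
  have hTB : T '' B = Subtype.val '' (Tr '' B₀) := by
    rw [← hBeq, ← image_comp, ← image_comp]
    exact image_congr fun x _ => rfl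
  have h2 : μH[(d : ℝ)] (T '' B) = μH[(d : ℝ)] (Tr '' B₀) := by
    rw [hTB]
    exact isometry_subtype_coe.hausdorffMeasure_image (Or.inl (by positivity)) _
  have h3 : μH[(d : ℝ)] (Tr '' B₀) = μH[(d : ℝ)] (e' '' (Tr '' B₀)) :=
    (e'.isometry.hausdorffMeasure_image (Or.inl (by positivity)) _).symm
  have h4 : e' '' (Tr '' B₀) = L '' (e '' B₀) := by
    rw [← image_comp, ← image_comp]
    refine image_congr fun x _ => ?_
    simp [hL]
  have h5 : μH[(d : ℝ)] (e '' B₀) = μH[(d : ℝ)] B₀ :=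
    e.isometry.hausdorffMeasure_image (Or.inl (by positivity)) _
  rw [h2, h3, h4, Measure.addHaar_image_linearMap, h5, h1]

lemma scaling_aff {ℓ n d : ℕ} (T : Euc ℓ →ₗ[ℝ] Euc n) (W : AffineSubspace ℝ (Euc ℓ))
    (p : Euc ℓ) (hp : p ∈ W) (hd : finrank ℝ W.direction = d)
    (hinj : ∀ x ∈ W.direction, T x = 0 → x = 0) :
    ∃ c : ℝ≥0∞, c ≠ 0 ∧ c ≠ ⊤ ∧ ∀ A ⊆ (W : Set (Euc ℓ)),
      μH[(d : ℝ)] (T '' A) = c * μH[(d : ℝ)] A := by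
  obtain ⟨c, hc0, hct, hc⟩ := scaling_sub T W.direction hd hinj
  refine ⟨c, hc0, hct, fun A hA => ?_⟩
  set B : Set (Euc ℓ) := (fun x => x - p) '' A with hB
  have hBD : B ⊆ (W.direction : Set (Euc ℓ)) := by
    rintro _ ⟨x, hx, rfl⟩
    exact AffineSubspace.vsub_mem_direction (hA hx) hp
  have h1 : μH[(d : ℝ)] B = μH[(d : ℝ)] A := by
    have : B = (IsometryEquiv.addRight (-p)) '' A := by
      rw [hB]; exact image_congr fun x _ => (sub_eq_add_neg x p)
    rw [this, IsometryEquiv.hausdorffMeasure_image]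
  have h2 : T '' A = (IsometryEquiv.addRight (T p)) '' (T '' B) := by
    rw [hB, ← image_comp, ← image_comp]
    refine image_congr fun x _ => ?_
    simp [map_sub, sub_add_cancel]
  rw [h2, IsometryEquiv.hausdorffMeasure_image, hc B hBD, h1]

lemma span_image {m n : ℕ} (M : Euc m →ₗ[ℝ] Euc n) (s : Set (Euc m)) :
    (affineSpan ℝ (M '' s) : Set (Euc n)) = M '' (affineSpan ℝ s : Set (Euc m)) := by
  have h := congrArg (fun (W : AffineSubspace ℝ (Euc n)) => (W : Set (Euc n)))
    (AffineSubspace.map_span M.toAffineMap s)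
  simpa [AffineSubspace.coe_map] using h.symm

lemma span_subset_submodule {n : ℕ} {s : Set (Euc n)} {U : Submodule ℝ (Euc n)} (h : s ⊆ ↑U) :
    (affineSpan ℝ s : Set (Euc n)) ⊆ ↑U := by
  intro x hx
  have hle : affineSpan ℝ s ≤ U.toAffineSubspace := by
    rw [affineSpan_le]
    intro y hy
    exact (Submodule.mem_toAffineSubspace).mpr (h hy)
  exact (Submodule.mem_toAffineSubspace).mp (hle hx)

section Forward

variable {ℓ n : ℕ}


lemma forward (𝕊 S : Set (Euc ℓ)) (hsub : S ⊆ 𝕊) (hne : S.Nonempty)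
    (V : Submodule ℝ (Euc ℓ)) (Prj : Euc ℓ →ₗ[ℝ] Euc ℓ)
    (hPrj : ∀ x : Euc ℓ, Prj x = (V.orthogonalProjectionOnto x : Euc ℓ))
    (hOC : ddi (Prj '' S) 𝕊 = {Prj '' 𝕊})
    (M : Euc ℓ →ₗ[ℝ] Euc n) (hM : (LinearMap.ker M)ᗮ = V) :
    ddi (M '' S) 𝕊 = {M '' 𝕊} := by
  classical
  have hker : LinearMap.ker M = Vᗮ := by
    rw [← hM, Submodule.orthogonal_orthogonal]
  have hPmem : ∀ x : Euc ℓ, Prj x ∈ V := fun x => by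
    rw [hPrj]; exact (V.orthogonalProjectionOnto x).2
  have hMP : ∀ x : Euc ℓ, M (Prj x) = M x := by
    intro x
    have hmem : x - Prj x ∈ LinearMap.ker M := by
      rw [hker, hPrj]; exact V.sub_starProjection_mem_orthogonal x
    have h0 : M x - M (Prj x) = 0 := by
      rw [← map_sub]; exact LinearMap.mem_ker.mp hmem
    exact (sub_eq_zero.mp h0).symm
  have hPid : ∀ x ∈ V, Prj x = x := fun x hx => by
    rw [hPrj]; exact Submodule.starProjection_eq_self_iff.mpr hx
  have hMinjV : ∀ x ∈ V, M x = 0 → x = 0 := by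
    intro x hx h0
    have hx' : x ∈ Vᗮ := hker ▸ LinearMap.mem_ker.mpr h0
    simpa using Submodule.mem_bot (R := ℝ) |>.mp
      ((V.orthogonal_disjoint.le_bot) ⟨hx, hx'⟩)
  -- construct the left inverse G
  set N : ↥V →ₗ[ℝ] Euc n := M.comp V.subtype with hN
  have hNinj : Function.Injective N := by
    intro x y hxy
    have : M ((x : Euc ℓ) - y) = 0 := by simpa [hN, map_sub, sub_eq_zero] using hxy
    have := hMinjV _ (V.sub_mem x.2 y.2) this
    exact Subtype.ext (by simpa [sub_eq_zero] using this)
  set eN : ↥V ≃ₗ[ℝ] ↥(LinearMap.range N) := LinearEquiv.ofInjective N hNinj with heN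
  set G : Euc n →ₗ[ℝ] Euc ℓ :=
    V.subtype ∘ₗ eN.symm.toLinearMap ∘ₗ (LinearMap.range N).orthogonalProjectionOnto.toLinearMap
    with hG
  have hGatN : ∀ (y : Euc n) (hy : y ∈ LinearMap.range N),
      G y = ((eN.symm ⟨y, hy⟩ : ↥V) : Euc ℓ) := by
    intro y hy
    have : (LinearMap.range N).orthogonalProjectionOnto y = ⟨y, hy⟩ := by
      exact Submodule.orthogonalProjectionOnto_mem_subspace_eq_self (⟨y, hy⟩ : ↥(LinearMap.range N))
    simp [hG, this]
  have hMGatN : ∀ (y : Euc n), y ∈ LinearMap.range N → M (G y) = y := by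
    intro y hy
    rw [hGatN y hy]
    show N (eN.symm ⟨y, hy⟩) = y
    have h2 : ((eN (eN.symm ⟨y, hy⟩) : ↥(LinearMap.range N)) : Euc n) = N (eN.symm ⟨y, hy⟩) := by
      simp [heN]
    rw [← h2, eN.apply_symm_apply]
  have hMxmem : ∀ x : Euc ℓ, M x ∈ LinearMap.range N := by
    intro x
    exact ⟨⟨Prj x, hPmem x⟩, hMP x⟩
  have hGM : ∀ x : Euc ℓ, G (M x) = Prj x := by
    intro x
    rw [hGatN (M x) (hMxmem x)]
    have heq : eN ⟨Prj x, hPmem x⟩ = ⟨M x, hMxmem x⟩ := by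
      apply Subtype.ext
      have : ((eN ⟨Prj x, hPmem x⟩ : ↥(LinearMap.range N)) : Euc n) = N ⟨Prj x, hPmem x⟩ := by
        simp [heN]
      rw [this]
      exact hMP x
    rw [← heq, eN.symm_apply_apply]
  -- sets and spans
  set X : Set (Euc ℓ) := Prj '' S with hX
  set X' : Set (Euc n) := M '' S with hX'
  have hX'MX : M '' X = X' := by
    rw [hX, hX', ← image_comp]
    exact image_congr fun s _ => hMP s
  have hXV : X ⊆ (V : Set (Euc ℓ)) := by rintro _ ⟨s, hs, rfl⟩; exact hPmem s
  set W : AffineSubspace ℝ (Euc ℓ) := affineSpan ℝ X with hW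
  have hWV : (W : Set (Euc ℓ)) ⊆ ↑V := span_subset_submodule hXV
  have hGMW : ∀ x ∈ (W : Set (Euc ℓ)), G (M x) = x := fun x hx =>
    (hGM x).trans (hPid x (hWV hx))
  set W' : AffineSubspace ℝ (Euc n) := affineSpan ℝ X' with hW'
  have hspan' : (W' : Set (Euc n)) = M '' (W : Set (Euc ℓ)) := by
    rw [hW', ← hX'MX, span_image, hW]
  have hW'N : (W' : Set (Euc n)) ⊆ ↑(LinearMap.range N) := by
    rw [hspan']; rintro _ ⟨x, hx, rfl⟩; exact hMxmem x
  have hMGW' : ∀ y ∈ (W' : Set (Euc n)), M (G y) = y := fun y hy => hMGatN y (hW'N hy)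
  have hGX' : G '' X' = X := by
    rw [hX', hX, ← image_comp]; exact image_congr fun s _ => hGM s
  -- dimensions
  set d : ℕ := finrank ℝ W.direction with hd
  have hW'map : W' = W.map M.toAffineMap := by
    rw [hW', ← hX'MX, hW, AffineSubspace.map_span M.toAffineMap X,
      LinearMap.coe_toAffineMap]
  have hWmap : W = W'.map G.toAffineMap := by
    rw [hW, ← hGX', hW', AffineSubspace.map_span G.toAffineMap X',
      LinearMap.coe_toAffineMap]
  have hdirW' : W'.direction = W.direction.map M := by
    rw [hW'map, AffineSubspace.map_direction, LinearMap.toAffineMap_linear]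
  have hdirW : W.direction = W'.direction.map G := by
    rw [hWmap, AffineSubspace.map_direction, LinearMap.toAffineMap_linear]
  have hd' : finrank ℝ W'.direction = d := by
    apply le_antisymm
    · rw [hdirW']; exact Submodule.finrank_map_le M W.direction
    · rw [hd, hdirW]; exact Submodule.finrank_map_le G W'.direction
  -- scaling constant
  obtain ⟨s₀, hs₀⟩ := hne
  have hpW : Prj s₀ ∈ W := by
    rw [hW]; exact mem_affineSpan ℝ ⟨s₀, hs₀, rfl⟩
  have hDV : W.direction ≤ V := by
    have hle : W ≤ V.toAffineSubspace := by
      rw [hW, affineSpan_le]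
      intro y hy; exact Submodule.mem_toAffineSubspace.mpr (hXV hy)
    have h2 := AffineSubspace.direction_le hle
    rwa [Submodule.toAffineSubspace_direction] at h2
  obtain ⟨c, hc0, hct, hsc⟩ :=
    scaling_aff M W (Prj s₀) hpW hd.symm (fun x hx h0 => hMinjV x (hDV hx) h0)
  -- exponents
  have hedX : ((finrank ℝ (affineSpan ℝ X).direction : ℕ) : ℝ) = ((d : ℕ) : ℝ) := by
    rw [← hW, ← hd]
  have hedX' : ((finrank ℝ (affineSpan ℝ X').direction : ℕ) : ℝ) = ((d : ℕ) : ℝ) := by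
    rw [← hW', hd']
  -- the optimum for Prj
  have hPddi : Prj '' 𝕊 ∈ ddi X 𝕊 := by rw [hOC]; rfl
  obtain ⟨hPadm, hPmin⟩ := hPddi
  have h𝕊W : Prj '' 𝕊 ⊆ (W : Set (Euc ℓ)) := by rw [hW]; exact hPadm.2.2
  -- transfer of admissibility
  have hFwd : ∀ R : Set (Euc ℓ), Admissible 𝕊 X R → Admissible 𝕊 X' (M '' R) := by
    rintro R ⟨⟨M1, rfl⟩, hXR, hRW⟩
    refine ⟨⟨M ∘ₗ M1, (image_comp _ _ _).symm⟩, ?_, ?_⟩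
    · rw [← hX'MX]; exact image_mono (f := M) hXR
    · intro y hy
      rw [← hW', hspan']
      obtain ⟨x, hx, rfl⟩ := hy
      exact ⟨x, by rw [← hW] at hRW; exact hRW hx, rfl⟩
  have hBwd : ∀ R' : Set (Euc n), Admissible 𝕊 X' R' →
      Admissible 𝕊 X (G '' R') ∧ M '' (G '' R') = R' := by
    rintro R' ⟨⟨M1, rfl⟩, hXR', hR'W⟩
    have hR'W2 : M1 '' 𝕊 ⊆ (W' : Set (Euc n)) := by rw [hW']; exact hR'W
    constructor
    · refine ⟨⟨G ∘ₗ M1, (image_comp _ _ _).symm⟩, ?_, ?_⟩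
      · rw [← hGX']; exact image_mono (f := G) hXR'
      · intro z hz
        rw [← hW]
        obtain ⟨y, hy, rfl⟩ := hz
        have hMW : y ∈ M '' (W : Set (Euc ℓ)) := by rw [← hspan']; exact hR'W2 hy
        obtain ⟨x, hx, rfl⟩ := hMW
        rw [hGMW x hx]; exact hx
    · apply Set.Subset.antisymm
      · rintro _ ⟨_, ⟨y, hy, rfl⟩, rfl⟩
        rwa [hMGatN y (hW'N (hR'W2 hy))]
      · intro y hy
        exact ⟨G y, ⟨y, hy, rfl⟩, hMGatN y (hW'N (hR'W2 hy))⟩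
  -- conclusion
  ext R'
  simp only [Set.mem_singleton_iff]
  constructor
  · rintro ⟨hadm', hmin'⟩
    rw [hedX'] at hmin'
    obtain ⟨hQadm, hQeq⟩ := hBwd R' hadm'
    have hQW : G '' R' ⊆ (W : Set (Euc ℓ)) := by rw [hW]; exact hQadm.2.2
    have hQmin : ∀ R, Admissible 𝕊 X R →
        μH[((d : ℕ) : ℝ)] (G '' R') ≤ μH[((d : ℕ) : ℝ)] R := by
      intro R hR
      have hRW : R ⊆ (W : Set (Euc ℓ)) := by rw [hW]; exact hR.2.2
      have h1 : μH[((d : ℕ) : ℝ)] R' ≤ μH[((d : ℕ) : ℝ)] (M '' R) :=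
        hmin' (M '' R) (hFwd R hR)
      rw [hsc R hRW] at h1
      have h2 : μH[((d : ℕ) : ℝ)] R' = c * μH[((d : ℕ) : ℝ)] (G '' R') := by
        rw [← hsc _ hQW, hQeq]
      rw [h2] at h1
      exact (ENNReal.mul_le_mul_iff_right hc0 hct).mp h1
    have hmem : G '' R' ∈ ddi X 𝕊 :=
      ⟨hQadm, fun R hR => by rw [hedX]; exact hQmin R hR⟩
    rw [hOC] at hmem
    have hQ : G '' R' = Prj '' 𝕊 := hmem
    calc R' = M '' (G '' R') := hQeq.symm
      _ = M '' (Prj '' 𝕊) := by rw [hQ]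
      _ = M '' 𝕊 := by rw [← image_comp]; exact image_congr fun s _ => hMP s
  · rintro rfl
    have himg : M '' (Prj '' 𝕊) = M '' 𝕊 := by
      rw [← image_comp]; exact image_congr fun s _ => hMP s
    have hP : μH[((d : ℕ) : ℝ)] (M '' 𝕊) = c * μH[((d : ℕ) : ℝ)] (Prj '' 𝕊) := by
      rw [← himg, hsc _ h𝕊W]
    constructor
    · refine ⟨⟨M, rfl⟩, image_mono (f := M) hsub, ?_⟩
      intro y hy
      rw [← hW', hspan']
      obtain ⟨s, hs, rfl⟩ := hy
      exact ⟨Prj s, h𝕊W ⟨s, hs, rfl⟩, hMP s⟩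
    · intro R'' hadm''
      rw [hedX']
      obtain ⟨hQadm, hQeq⟩ := hBwd R'' hadm''
      have hQW : G '' R'' ⊆ (W : Set (Euc ℓ)) := by rw [hW]; exact hQadm.2.2
      have h1 : μH[((d : ℕ) : ℝ)] (Prj '' 𝕊) ≤ μH[((d : ℕ) : ℝ)] (G '' R'') := by
        have := hPmin (G '' R'') hQadm
        rwa [hedX] at this
      calc μH[((d : ℕ) : ℝ)] (M '' 𝕊) = c * μH[((d : ℕ) : ℝ)] (Prj '' 𝕊) := hP
        _ ≤ c * μH[((d : ℕ) : ℝ)] (G '' R'') := mul_le_mul_right h1 c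
        _ = μH[((d : ℕ) : ℝ)] (M '' (G '' R'')) := (hsc _ hQW).symm
        _ = μH[((d : ℕ) : ℝ)] R'' := by rw [hQeq]

end Forward
end AuxLemmas

theorem stmt_7 {ℓ : ℕ} (hℓ : 2 ≤ ℓ) (𝕊 : Set (Euc ℓ)) (hS : IsStateSpace 𝕊)
    (S : Set (Euc ℓ)) (hsub : S ⊆ 𝕊) (hne : S.Nonempty)
    (V : Submodule ℝ (Euc ℓ)) (Prj : Euc ℓ →ₗ[ℝ] Euc ℓ)
    (hPrj : ∀ x : Euc ℓ, Prj x = (V.orthogonalProjectionOnto x : Euc ℓ)) :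
    ObsComplete 𝕊 S Prj ↔
      ∀ (n : ℕ) (M : Euc ℓ →ₗ[ℝ] Euc n), (LinearMap.ker M)ᗮ = V →
        ObsComplete 𝕊 S M := by
  constructor
  · intro hOC n M hM
    exact forward 𝕊 S hsub hne V Prj hPrj hOC M hM
  · intro h
    have hkerP : LinearMap.ker Prj = Vᗮ := by
      ext x
      simp [LinearMap.mem_ker, hPrj, ZeroMemClass.coe_eq_zero,
        Submodule.orthogonalProjectionOnto_eq_zero_iff]
      exact Iff.trans ZeroMemClass.coe_eq_zero Submodule.orthogonalProjectionOnto_eq_zero_iff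
    have hMV : (LinearMap.ker Prj)ᗮ = V := by
      rw [hkerP, Submodule.orthogonal_orthogonal]
    exact h ℓ Prj hMV
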